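/- arXiv:0910.5331 — 2 statements merged into one kernel-verified Lean document; each statement's English description precedes it below -/
import Mathlib

section
/- For each λ > 0 there exists a positive constant C_λ such that for every ε > 0 and every holomorphic map g : Δ → Δ satisfying |1 − g(0)| ≤ ε, one has |1 − g(ζ)| ≤ λ whenever |ζ| ≤ 1 − C_λ ε. -/
open Metric Set Filter MeasureTheory
open scoped Topology

noncomputable section

variable {E : Type*} [NormedAddCommGroup E] [NormedSpace ℂ E]
variable {F : Type*} [NormedAddCommGroup F] [NormedSpace ℂ F]

/-- The infinitesimal Kobayashi (Kobayashi–Royden) metric of a set `D`. -/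
def kobMetric (D : Set E) (z : E) (v : E) : ℝ :=
  sInf {c : ℝ | ∃ α : ℝ, 0 < α ∧ c = 1 / α ∧ ∃ f : ℂ → E,
    DifferentiableOn ℂ f (ball 0 1) ∧ MapsTo f (ball 0 1) D ∧ f 0 = z ∧ deriv f 0 = α • v}

/-- The Kobayashi length of a path. -/
def kobLength (D : Set E) (γ : ℝ → E) : ℝ :=
  ∫ t in (0:ℝ)..1, kobMetric D (γ t) (deriv γ t)

/-- The (integrated) Kobayashi distance on a set `D`. -/
def kobDist (D : Set E) (p q : E) : ℝ :=
  sInf {c : ℝ | ∃ γ : ℝ → E, ContDiffOn ℝ 1 γ (Icc 0 1) ∧ MapsTo γ (Icc 0 1) D ∧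
    γ 0 = p ∧ γ 1 = q ∧ c = kobLength D γ}

/-- Kobayashi metric ball of radius `r` centered at `p`. -/
def kobBall (D : Set E) (p : E) (r : ℝ) : Set E :=
  {q ∈ D | kobDist D p q < r}

/-- `D` is (Kobayashi) hyperbolic: the Kobayashi distance separates points and induces
the ambient topology. -/
def IsKobHyperbolic (D : Set E) : Prop :=
  (∀ p ∈ D, ∀ q ∈ D, p ≠ q → 0 < kobDist D p q) ∧
  (∀ p ∈ D, ∀ ε : ℝ, 0 < ε → ∃ δ > 0, ∀ q ∈ D, kobDist D p q < δ → ‖q - p‖ < ε)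

/-- `D` is complete with respect to the Kobayashi distance: every Kobayashi-Cauchy
sequence converges to a point of `D`. -/
def KobComplete (D : Set E) : Prop :=
  ∀ u : ℕ → E, (∀ k, u k ∈ D) →
    (∀ ε : ℝ, 0 < ε → ∃ N : ℕ, ∀ m ≥ N, ∀ k ≥ N, kobDist D (u m) (u k) < ε) →
    ∃ x ∈ D, Tendsto u atTop (𝓝 x)

/-- `f` is a biholomorphism of `D` onto `X`. -/
def IsBiholo (D : Set E) (X : Set F) (f : E → F) : Prop :=
  DifferentiableOn ℂ f D ∧ BijOn f D X ∧
    ∃ g : F → E, DifferentiableOn ℂ g X ∧ (∀ z ∈ D, g (f z) = z) ∧ (∀ w ∈ X, f (g w) = w)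

/-- `f` is a biholomorphic embedding of `D` into `X` (a biholomorphism onto its image). -/
def IsBiholoEmbed (D : Set E) (X : Set F) (f : E → F) : Prop :=
  DifferentiableOn ℂ f D ∧ MapsTo f D X ∧ InjOn f D ∧
    ∃ g : F → E, DifferentiableOn ℂ g (f '' D) ∧ ∀ z ∈ D, g (f z) = z

/-- Fridman's invariant `h_X(p, Ω)`. -/
def fridman (X : Set F) (p : F) (Ω : Set E) : ℝ :=
  sInf {c : ℝ | ∃ r : ℝ, 0 < r ∧ c = 1 / r ∧ ∃ f : E → F,
    IsBiholoEmbed Ω X f ∧ kobBall X p r ⊆ f '' Ω}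

/-- `D` is taut: every sequence of holomorphic discs in `D` has a subsequence converging
locally uniformly to a holomorphic disc in `D`, or a compactly divergent subsequence. -/
def IsTaut (D : Set E) : Prop :=
  IsOpen D ∧ ∀ f : ℕ → ℂ → E,
    (∀ k, DifferentiableOn ℂ (f k) (ball 0 1) ∧ MapsTo (f k) (ball 0 1) D) →
    (∃ φ : ℕ → ℕ, StrictMono φ ∧ ∃ g : ℂ → E, DifferentiableOn ℂ g (ball 0 1) ∧
        MapsTo g (ball 0 1) D ∧ ∀ K : Set ℂ, K ⊆ ball 0 1 → IsCompact K →
          TendstoUniformlyOn (fun k => f (φ k)) g atTop K) ∨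
    (∃ φ : ℕ → ℕ, StrictMono φ ∧ ∀ L : Set E, IsCompact L → L ⊆ D →
        ∀ K : Set ℂ, K ⊆ ball 0 1 → IsCompact K →
          ∀ᶠ k in atTop, ∀ z ∈ K, f (φ k) z ∉ L)

/-- The Poincaré (hyperbolic) distance on the unit disc. -/
def hypDist (z w : ℂ) : ℝ :=
  (1 / 2) * Real.log ((1 + ‖(z - w) / (1 - (starRingEnd ℂ) w * z)‖) /
    (1 - ‖(z - w) / (1 - (starRingEnd ℂ) w * z)‖))

end

noncomputable section

lemma normSq_key (a w : ℂ) :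
    Complex.normSq (1 - (starRingEnd ℂ) a * w) - Complex.normSq (w - a)
      = (1 - Complex.normSq a) * (1 - Complex.normSq w) := by
  simp [Complex.normSq_apply, Complex.mul_re, Complex.mul_im, Complex.sub_re, Complex.sub_im,
    Complex.conj_re, Complex.conj_im, Complex.one_re, Complex.one_im]
  ring

lemma abs_lt_key {a w : ℂ} (ha : ‖a‖ < 1) (hw : ‖w‖ < 1) :
    ‖w - a‖ < ‖1 - (starRingEnd ℂ) a * w‖ := by
  have h := normSq_key a w
  have ha' : Complex.normSq a < 1 := by rw [← Complex.sq_norm]; nlinarith [norm_nonneg a]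
  have hw' : Complex.normSq w < 1 := by rw [← Complex.sq_norm]; nlinarith [norm_nonneg w]
  have h2 : Complex.normSq (w - a) < Complex.normSq (1 - (starRingEnd ℂ) a * w) := by nlinarith
  have := Real.sqrt_lt_sqrt (Complex.normSq_nonneg _) h2
  simpa [Complex.norm_def] using this

/-- Schwarz–Pick at the origin. -/
lemma schwarz_pick {g : ℂ → ℂ} (hd : DifferentiableOn ℂ g (ball 0 1))
    (hm : MapsTo g (ball 0 1) (ball 0 1)) {ζ : ℂ} (hζ : ‖ζ‖ < 1) :
    ‖g ζ - g 0‖ ≤ ‖ζ‖ * ‖1 - (starRingEnd ℂ) (g 0) * g ζ‖ := by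
  set a := g 0 with ha_def
  have h0 : (0 : ℂ) ∈ ball (0:ℂ) 1 := by simp
  have ha : ‖a‖ < 1 := by simpa using hm h0
  set h : ℂ → ℂ := fun z => (g z - a) / (1 - (starRingEnd ℂ) a * g z) with hh
  have hden : ∀ z ∈ ball (0:ℂ) 1, 1 - (starRingEnd ℂ) a * g z ≠ 0 := by
    intro z hz
    have hg : ‖g z‖ < 1 := by simpa using hm hz
    have : ‖(starRingEnd ℂ) a * g z‖ < 1 := by
      rw [norm_mul, Complex.norm_conj]
      nlinarith [norm_nonneg a, norm_nonneg (g z)]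
    intro hc
    rw [sub_eq_zero] at hc
    rw [← hc] at this
    simp at this
  have hdh : DifferentiableOn ℂ h (ball 0 1) := by
    apply DifferentiableOn.div
    · exact hd.sub (differentiableOn_const a)
    · exact (differentiableOn_const (1:ℂ)).sub ((differentiableOn_const _).mul hd)
    · exact hden
  have hmh : MapsTo h (ball 0 1) (ball 0 1) := by
    intro z hz
    have hg : ‖g z‖ < 1 := by simpa using hm hz
    have key := abs_lt_key ha hg
    have hdz := hden z hz
    rw [mem_ball_zero_iff]
    rw [hh]
    simp only [norm_div]
    rw [div_lt_one ((norm_pos_iff.mpr hdz))]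
    exact key
  have h0' : h 0 = 0 := by simp [hh, ha_def]
  have := Complex.norm_le_norm_of_mapsTo_ball_self hdh (hmh.mono_right ball_subset_closedBall) h0' hζ
  have hζb : ζ ∈ ball (0:ℂ) 1 := mem_ball_zero_iff.2 hζ
  have hdz := hden ζ hζb
  rw [hh] at this
  simp only [norm_div] at this
  rw [div_le_iff₀ ((norm_pos_iff.mpr hdz))] at this
  exact this

/-- quantitative Schwarz lemma near the boundary point `1`. -/
theorem stmt3 (lam : ℝ) (hlam : 0 < lam) :
    ∃ C : ℝ, 0 < C ∧ ∀ ε : ℝ, 0 < ε →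
      ∀ g : ℂ → ℂ, DifferentiableOn ℂ g (ball 0 1) → MapsTo g (ball 0 1) (ball 0 1) →
        ‖1 - g 0‖ ≤ ε →
        ∀ ζ : ℂ, ‖ζ‖ ≤ 1 - C * ε → ‖1 - g ζ‖ ≤ lam := by
  refine ⟨2 / lam + 1, by positivity, ?_⟩
  intro ε hε g hd hm hg0 ζ hζ
  set C := 2 / lam + 1 with hC
  have hCpos : 0 < C := by positivity
  have habsζ : (0:ℝ) ≤ ‖ζ‖ := norm_nonneg _
  have hCε : C * ε ≤ 1 - ‖ζ‖ := by linarith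
  have hζ1 : ‖ζ‖ < 1 := by nlinarith
  have hζb : ζ ∈ ball (0:ℂ) 1 := mem_ball_zero_iff.2 hζ1
  have hgζ : ‖g ζ‖ < 1 := by simpa using hm hζb
  have hsp := schwarz_pick hd hm hζ1
  set A := ‖1 - g ζ‖ with hA
  -- |1 - conj(g0) * g ζ| ≤ A + ε
  have hconj : ‖1 - (starRingEnd ℂ) (g 0)‖ ≤ ε := by
    have : ‖(starRingEnd ℂ) (1 - g 0)‖ ≤ ε := by rwa [Complex.norm_conj]
    simpa using this
  have hden : ‖1 - (starRingEnd ℂ) (g 0) * g ζ‖ ≤ A + ε := by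
    have heq : 1 - (starRingEnd ℂ) (g 0) * g ζ
        = (1 - g ζ) + (1 - (starRingEnd ℂ) (g 0)) * g ζ := by ring
    calc ‖1 - (starRingEnd ℂ) (g 0) * g ζ‖
        ≤ ‖1 - g ζ‖ + ‖(1 - (starRingEnd ℂ) (g 0)) * g ζ‖ := by
          rw [heq]; exact norm_add_le _ _
      _ ≤ A + ε := by
          rw [norm_mul]
          have h1 : ‖1 - (starRingEnd ℂ) (g 0)‖ * ‖g ζ‖ ≤ ε := by
            nlinarith [norm_nonneg (1 - (starRingEnd ℂ) (g 0)),
              norm_nonneg (g ζ)]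
          linarith
  have htri : A ≤ ε + ‖g 0 - g ζ‖ := by
    calc A ≤ ‖1 - g 0‖ + ‖g 0 - g ζ‖ := by
            have : (1 : ℂ) - g ζ = (1 - g 0) + (g 0 - g ζ) := by ring
            rw [hA, this]; exact norm_add_le _ _
      _ ≤ ε + ‖g 0 - g ζ‖ := by linarith
  have hsym : ‖g 0 - g ζ‖ = ‖g ζ - g 0‖ :=
    norm_sub_rev _ _
  have hmain : A ≤ ε + ‖ζ‖ * (A + ε) := by
    have := hsp.trans (by nlinarith [norm_nonneg ζ] :
      ‖ζ‖ * ‖1 - (starRingEnd ℂ) (g 0) * g ζ‖ ≤ ‖ζ‖ * (A + ε))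
    rw [hsym] at htri
    linarith
  -- (1 - |ζ|) A ≤ 2 ε, and 1 - |ζ| ≥ C ε
  have hA0 : 0 ≤ A := norm_nonneg _
  have hfin : C * ε * A ≤ 2 * ε := by
    nlinarith [mul_le_mul_of_nonneg_right hCε hA0]
  have hAle : A ≤ 2 / C := by
    rw [le_div_iff₀ hCpos]
    nlinarith
  have : 2 / C ≤ lam := by
    rw [div_le_iff₀ hCpos, hC]
    have : 0 < 2 / lam := by positivity
    field_simp
    nlinarith
  linarith


end
end

section
/- The unit ball 𝔹ⁿ in ℂⁿ (n ≥ 2) is not biholomorphic to any product 𝔹^{n₁} × ⋯ × 𝔹^{n_k} of balls with k ≥ 2 and n₁ + ⋯ + n_k = n. -/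
open Metric Set Filter MeasureTheory
open scoped Topology

noncomputable section


section HolAux1
variable {G : Type*} [NormedAddCommGroup G] [InnerProductSpace ℂ G]
local notation "⟪" x ", " y "⟫" => @inner ℂ _ _ x y

lemma hol_aux_midpoint {a b : G} (ha : ‖a‖ = 1) (hb : ‖b‖ = 1) (hm : ‖(2:ℝ)⁻¹ • (a + b)‖ = 1) :
    a = b := by
  have h1 := norm_add_sq (𝕜 := ℂ) a b
  have h2 := norm_sub_sq (𝕜 := ℂ) a b
  have h3 : ‖a + b‖ = 2 := by
    have := norm_smul ((2:ℝ)⁻¹) (a + b)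
    rw [hm] at this
    simp at this
    linarith [this]
  have h4 : ‖a - b‖ ^ 2 = 0 := by rw [h2]; nlinarith [h1]
  have h5 : a - b = 0 := by
    have := sq_eq_zero_iff.mp h4
    simpa using this
  exact sub_eq_zero.mp h5

lemma hol_aux_mobius (a : G) (ha : a ∈ ball (0 : G) 1) :
    ∃ φ : G → G, DifferentiableOn ℂ φ (ball 0 1) ∧
      MapsTo φ (ball 0 1) (ball 0 1) ∧ φ 0 = a ∧
      ∀ z ∈ ball (0 : G) 1, φ (φ z) = z := by
  rcases eq_or_ne a 0 with rfl | ha0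
  · exact ⟨id, differentiableOn_id, mapsTo_id _, rfl, fun z _ => rfl⟩
  set A : ℝ := ‖a‖ ^ 2 with hAdef
  have hna : ‖a‖ < 1 := by simpa using ha
  have hA0 : 0 < A := by have := norm_pos_iff.mpr ha0; positivity
  have hA1 : A < 1 := by nlinarith [norm_nonneg a]
  set s : ℝ := Real.sqrt (1 - A) with hsdef
  have hs0 : 0 ≤ s := Real.sqrt_nonneg _
  have hs : s ^ 2 = 1 - A := Real.sq_sqrt (by linarith)
  set r : ℝ := (1 - s) / A with hrdef
  have hr : r * A = 1 - s := by rw [hrdef]; exact div_mul_cancel₀ _ hA0.ne'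
  set φ : G → G := fun z =>
    ((1 : ℂ) - ⟪a, z⟫)⁻¹ • ((1 - (r : ℂ) * ⟪a, z⟫) • a - (s : ℂ) • z) with hφdef
  -- denominators
  have hden : ∀ z ∈ ball (0 : G) 1, (1 : ℂ) - ⟪a, z⟫ ≠ 0 := by
    intro z hz h
    have hz1 : ‖z‖ < 1 := by simpa using hz
    have h1 : ‖(⟪a, z⟫ : ℂ)‖ < 1 :=
      lt_of_le_of_lt (norm_inner_le_norm a z)
        (by nlinarith [norm_nonneg a, norm_nonneg z])
    rw [sub_eq_zero] at h
    rw [← h] at h1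
    simp at h1
  -- key identity
  have key : ∀ z : G, ‖(1 - (r : ℂ) * ⟪a, z⟫) • a - (s : ℂ) • z‖ ^ 2
      = Complex.normSq ((1 : ℂ) - ⟪a, z⟫) - (1 - A) * (1 - ‖z‖ ^ 2) := by
    intro z
    have e1 := norm_sub_sq (𝕜 := ℂ) ((1 - (r : ℂ) * ⟪a, z⟫) • a) ((s : ℂ) • z)
    rw [e1, inner_smul_left, inner_smul_right, norm_smul, norm_smul]
    set α : ℂ := ⟪a, z⟫ with hα
    have hnormc : ‖(1 : ℂ) - (r : ℂ) * α‖ ^ 2 = Complex.normSq (1 - (r : ℂ) * α) := by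
      rw [← Complex.sq_norm]
    have hnorms : ‖((s : ℂ))‖ = s := by
      simpa using abs_of_nonneg hs0
    rw [mul_pow, mul_pow, hnormc, hnorms]
    have hre : Complex.re ((starRingEnd ℂ) (1 - (r : ℂ) * α) * ((s : ℂ) * α))
        = s * α.re - r * s * (α.re ^ 2 + α.im ^ 2) := by
      simp [Complex.mul_re, Complex.mul_im, Complex.sub_re, Complex.sub_im]
      ring
    simp only [RCLike.re_to_complex]
    rw [hre]
    have hA' : ‖a‖ ^ 2 = A := rfl
    rw [hA']
    simp only [Complex.normSq_apply, Complex.sub_re, Complex.sub_im, Complex.mul_re,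
      Complex.mul_im, Complex.one_re, Complex.one_im, Complex.ofReal_re, Complex.ofReal_im]
    have hrs : r * (1 + s) = 1 := by
      rw [hrdef]; field_simp; nlinarith [hs]
    linear_combination (-2*α.re + (α.re^2+α.im^2)*r) * hr + (α.re^2+α.im^2) * hrs
      + (‖z‖^2) * hs
  have hφapp : ∀ w : G, φ w = ((1 : ℂ) - ⟪a, w⟫)⁻¹ • ((1 - (r : ℂ) * ⟪a, w⟫) • a - (s : ℂ) • w) :=
    fun w => rfl
  have hinner : Differentiable ℂ (fun z : G => (⟪a, z⟫ : ℂ)) := (innerSL ℂ a).differentiable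
  have hφdiff : DifferentiableOn ℂ φ (ball 0 1) := by
    apply DifferentiableOn.smul
    · exact ((differentiableOn_const (1:ℂ)).sub hinner.differentiableOn).inv hden
    · exact (((hinner.const_mul (r:ℂ)).const_sub 1).smul_const a |>.sub
        (differentiable_id.const_smul (s:ℂ))).differentiableOn
  have hφmem : MapsTo φ (ball 0 1) (ball 0 1) := by
    intro z hz
    have hz1 : ‖z‖ < 1 := by simpa using hz
    have hβ := hden z hz
    have hnsq : 0 < Complex.normSq ((1:ℂ) - ⟪a,z⟫) := by
      simpa [Complex.normSq_pos] using hβ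
    have hsq : ‖φ z‖^2 = (Complex.normSq ((1:ℂ) - ⟪a,z⟫))⁻¹
        * ‖(1 - (r:ℂ)*⟪a,z⟫) • a - (s:ℂ) • z‖^2 := by
      rw [hφapp z, norm_smul, mul_pow, norm_inv]
      congr 1
      rw [inv_pow, ← Complex.sq_norm]
    rw [key z] at hsq
    have hpos : 0 < (1 - A) * (1 - ‖z‖^2) := by
      have h1 : 0 < 1 - ‖z‖^2 := by nlinarith [norm_nonneg z]
      exact mul_pos (by linarith) h1
    have hlt : ‖φ z‖^2 < 1 := by
      rw [hsq, mul_sub, inv_mul_cancel₀ (ne_of_gt hnsq)]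
      have : 0 < (Complex.normSq ((1:ℂ) - ⟪a,z⟫))⁻¹ * ((1 - A) * (1 - ‖z‖^2)) := by
        positivity
      linarith
    have : ‖φ z‖ < 1 :=
      lt_of_pow_lt_pow_left₀ 2 zero_le_one (by rw [one_pow]; exact hlt)
    exact mem_ball_zero_iff.mpr this
  have hφ0 : φ 0 = a := by
    rw [hφapp 0]
    simp
  refine ⟨φ, hφdiff, hφmem, hφ0, ?_⟩
  intro z hz
  have hz1 : ‖z‖ < 1 := by simpa using hz
  have hβ := hden z hz
  have hA1c : ((1:ℂ) - (A:ℂ)) ≠ 0 := by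
    rw [sub_ne_zero]
    intro h
    have : (1:ℝ) = A := by exact_mod_cast h
    linarith
  have hAc : (A : ℂ) ≠ 0 := by exact_mod_cast ne_of_gt hA0
  have hrc : (r:ℂ) * (A:ℂ) = 1 - (s:ℂ) := by exact_mod_cast congrArg Complex.ofReal hr
  have hsc : (s:ℂ)^2 = 1 - (A:ℂ) := by exact_mod_cast congrArg Complex.ofReal hs
  have hrs : r * (1 + s) = 1 := by
    rw [hrdef]; field_simp; nlinarith [hs]
  have hrsc : (r:ℂ) * (1 + (s:ℂ)) = 1 := by exact_mod_cast congrArg Complex.ofReal hrs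
  have hAA : (⟪a, a⟫ : ℂ) = (A:ℂ) := by
    rw [inner_self_eq_norm_sq_to_K, hAdef]
    norm_cast
  have hw : (⟪a, φ z⟫ : ℂ) = ((1:ℂ) - ⟪a,z⟫)⁻¹ * ((A:ℂ) - ⟪a,z⟫) := by
    rw [hφapp z, inner_smul_right, inner_sub_right, inner_smul_right, inner_smul_right, hAA]
    congr 1
    linear_combination (-(⟪a,z⟫ : ℂ)) * hrc
  have hβ' : (1:ℂ) - ⟪a, φ z⟫ = ((1:ℂ) - ⟪a,z⟫)⁻¹ * ((1:ℂ) - (A:ℂ)) := by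
    rw [hw]; field_simp; ring
  rw [hφapp (φ z), hβ', hw, hφapp z]
  match_scalars
  · field_simp
    linear_combination (-1:ℂ) * hrc + (⟪a,z⟫:ℂ) * hrsc
  · field_simp
    linear_combination hsc

end HolAux1

section HolAux2
variable {E₁ E₂ : Type*} [NormedAddCommGroup E₁] [NormedSpace ℂ E₁]
  [NormedAddCommGroup E₂] [NormedSpace ℂ E₂]


lemma hol_aux_schwarz {F : E₁ → E₂} (hF : DifferentiableOn ℂ F (ball 0 1))
    (hm : MapsTo F (ball 0 1) (ball 0 1)) (h0 : F 0 = 0) (v : E₁) :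
    ‖fderiv ℂ F 0 v‖ ≤ ‖v‖ := by
  rcases eq_or_ne v 0 with rfl | hv
  · simp
  have hv0 : 0 < ‖v‖ := norm_pos_iff.mpr hv
  set R : ℝ := ‖v‖⁻¹ with hR
  have hR0 : 0 < R := by positivity
  set h : ℂ → E₂ := fun lam => F (lam • v) with hh
  have hmem : MapsTo (fun lam : ℂ => lam • v) (ball 0 R) (ball (0:E₁) 1) := by
    intro lam hlam
    have h1 : ‖lam‖ < R := by simpa using hlam
    rw [mem_ball_zero_iff, norm_smul]
    calc ‖lam‖ * ‖v‖ < R * ‖v‖ := by gcongr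
    _ = 1 := by rw [hR]; field_simp
  have hsm : DifferentiableOn ℂ (fun lam : ℂ => lam • v) (ball 0 R) :=
    (differentiable_id.smul_const v).differentiableOn
  have hd : DifferentiableOn ℂ h (ball 0 R) := hF.comp hsm hmem
  have hmaps : MapsTo h (ball 0 R) (ball (h 0) 1) := by
    intro lam hlam
    have h00 : h 0 = 0 := by simp [hh, h0]
    rw [h00]
    exact hm (hmem hlam)
  have hder := Complex.norm_deriv_le_div_of_mapsTo_ball hd (hmaps.mono_right ball_subset_closedBall) hR0
  have hF0 : DifferentiableAt ℂ F 0 :=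
    hF.differentiableAt (isOpen_ball.mem_nhds (mem_ball_self one_pos))
  have hDh : HasDerivAt h (fderiv ℂ F 0 v) 0 := by
    have h1 : HasDerivAt (fun lam : ℂ => lam • v) v 0 := by
      simpa using (hasDerivAt_id (0:ℂ)).smul_const v
    have h2 : HasFDerivAt F (fderiv ℂ F 0) ((0:ℂ) • v) := by
      rw [zero_smul]; exact hF0.hasFDerivAt
    exact h2.comp_hasDerivAt 0 h1
  rw [hDh.deriv] at hder
  calc ‖fderiv ℂ F 0 v‖ ≤ 1 / R := hder
  _ = ‖v‖ := by rw [hR]; field_simp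

end HolAux2

/-- the unit ball in `ℂⁿ` (`n ≥ 2`) is not biholomorphic to a product of
at least two balls. -/
theorem stmt12 (n : ℕ) (hn : 2 ≤ n) (k : ℕ) (hk : 2 ≤ k) (d : Fin k → ℕ)
    (hd : ∀ i, 1 ≤ d i) (hsum : ∑ i, d i = n) :
    ¬ ∃ f : EuclideanSpace ℂ (Fin n) → (Π i : Fin k, EuclideanSpace ℂ (Fin (d i))),
      IsBiholo (ball (0 : EuclideanSpace ℂ (Fin n)) 1)
        (Set.univ.pi fun i => ball (0 : EuclideanSpace ℂ (Fin (d i))) 1) f := by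
  rintro ⟨f, hfd, hfbij, g, hgd, hgf, hfg⟩
  have hball : (Set.univ.pi fun i : Fin k => ball (0 : EuclideanSpace ℂ (Fin (d i))) 1)
      = ball (0 : Π i : Fin k, EuclideanSpace ℂ (Fin (d i))) 1 := by
    rw [ball_pi _ one_pos]
    rfl
  rw [hball] at hfbij hgd hfg
  have hgm : MapsTo g (ball (0 : Π i : Fin k, EuclideanSpace ℂ (Fin (d i))) 1)
      (ball (0 : EuclideanSpace ℂ (Fin n)) 1) := by
    intro w hw
    obtain ⟨z, hz, rfl⟩ := hfbij.surjOn hw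
    rw [hgf z hz]; exact hz
  have h02 : (0 : Π i : Fin k, EuclideanSpace ℂ (Fin (d i))) ∈ ball 0 1 :=
    mem_ball_self one_pos
  have ha : g 0 ∈ ball (0 : EuclideanSpace ℂ (Fin n)) 1 := hgm h02
  have hfa : f (g 0) = 0 := hfg 0 h02
  obtain ⟨φ, hφd, hφm, hφ0, hφinv⟩ := hol_aux_mobius (g 0) ha
  set f₁ := f ∘ φ with hf₁
  set g₁ := φ ∘ g with hg₁
  have hf₁d : DifferentiableOn ℂ f₁ (ball 0 1) := hfd.comp hφd hφm
  have hf₁m : MapsTo f₁ (ball 0 1) (ball 0 1) := hfbij.mapsTo.comp hφm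
  have hf₁0 : f₁ 0 = 0 := by
    simp only [hf₁, Function.comp_apply, hφ0, hfa]
  have hg₁d : DifferentiableOn ℂ g₁ (ball 0 1) := hφd.comp hgd hgm
  have hg₁m : MapsTo g₁ (ball 0 1) (ball 0 1) := hφm.comp hgm
  have hg₁f₁ : ∀ z ∈ ball (0 : EuclideanSpace ℂ (Fin n)) 1, g₁ (f₁ z) = z := by
    intro z hz
    simp only [hf₁, hg₁, Function.comp_apply]
    rw [hgf _ (hφm hz)]
    exact hφinv z hz
  have hf₁g₁ : ∀ w ∈ ball (0 : Π i : Fin k, EuclideanSpace ℂ (Fin (d i))) 1,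
      f₁ (g₁ w) = w := by
    intro w hw
    simp only [hf₁, hg₁, Function.comp_apply]
    rw [hφinv _ (hgm hw)]
    exact hfg w hw
  have hg₁0 : g₁ 0 = 0 := by
    have := hg₁f₁ 0 (mem_ball_self one_pos)
    rwa [hf₁0] at this
  set L := fderiv ℂ f₁ 0 with hL'
  set M := fderiv ℂ g₁ 0 with hM'
  have hL : ∀ v, ‖L v‖ ≤ ‖v‖ := hol_aux_schwarz hf₁d hf₁m hf₁0
  have hM : ∀ w, ‖M w‖ ≤ ‖w‖ := hol_aux_schwarz hg₁d hg₁m hg₁0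
  have hf₁0' : DifferentiableAt ℂ f₁ 0 :=
    hf₁d.differentiableAt (isOpen_ball.mem_nhds (mem_ball_self one_pos))
  have hg₁0' : DifferentiableAt ℂ g₁ 0 :=
    hg₁d.differentiableAt (isOpen_ball.mem_nhds (mem_ball_self one_pos))
  have hML : ∀ v, M (L v) = v := by
    have hcomp : HasFDerivAt (g₁ ∘ f₁) (M.comp L) 0 := by
      have h2 : HasFDerivAt g₁ M (f₁ 0) := by rw [hf₁0]; exact hg₁0'.hasFDerivAt
      exact h2.comp 0 hf₁0'.hasFDerivAt
    have hev : (g₁ ∘ f₁) =ᶠ[nhds 0] id := by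
      filter_upwards [isOpen_ball.mem_nhds (mem_ball_self one_pos)] with z hz
      exact hg₁f₁ z hz
    have hid : HasFDerivAt id (M.comp L) (0 : EuclideanSpace ℂ (Fin n)) :=
      hcomp.congr_of_eventuallyEq hev.symm
    have huniq := hid.unique (hasFDerivAt_id 0)
    intro v
    have := congrFun (congrArg DFunLike.coe huniq) v
    simpa using this
  have hLM : ∀ w, L (M w) = w := by
    have hcomp : HasFDerivAt (f₁ ∘ g₁) (L.comp M) 0 := by
      have h2 : HasFDerivAt f₁ L (g₁ 0) := by rw [hg₁0]; exact hf₁0'.hasFDerivAt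
      exact h2.comp 0 hg₁0'.hasFDerivAt
    have hev : (f₁ ∘ g₁) =ᶠ[nhds 0] id := by
      filter_upwards [isOpen_ball.mem_nhds (mem_ball_self one_pos)] with w hw
      exact hf₁g₁ w hw
    have hid : HasFDerivAt id (L.comp M)
        (0 : Π i : Fin k, EuclideanSpace ℂ (Fin (d i))) :=
      hcomp.congr_of_eventuallyEq hev.symm
    have huniq := hid.unique (hasFDerivAt_id 0)
    intro w
    have := congrFun (congrArg DFunLike.coe huniq) w
    simpa using this
  have hiso : ∀ v, ‖L v‖ = ‖v‖ := by
    intro v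
    refine le_antisymm (hL v) ?_
    calc ‖v‖ = ‖M (L v)‖ := by rw [hML v]
    _ ≤ ‖L v‖ := hM _
  -- construct the vectors in the product space
  have hk0 : 0 < k := by omega
  have hk1 : 1 < k := by omega
  set i₀ : Fin k := ⟨0, hk0⟩ with hi₀
  set i₁ : Fin k := ⟨1, hk1⟩ with hi₁
  have hne : i₀ ≠ i₁ := by simp [hi₀, hi₁, Fin.ext_iff]
  set u : Π i : Fin k, EuclideanSpace ℂ (Fin (d i)) :=
    fun i => EuclideanSpace.single (⟨0, hd i⟩ : Fin (d i)) (1:ℂ) with hu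
  have hun : ∀ i, ‖u i‖ = 1 := by
    intro i
    rw [hu]
    simp [EuclideanSpace.norm_single]
  set x : Π i : Fin k, EuclideanSpace ℂ (Fin (d i)) := Pi.single i₀ (u i₀) with hx
  set y : Π i : Fin k, EuclideanSpace ℂ (Fin (d i)) := Pi.single i₁ (u i₁) with hy
  have hnorm1 : ∀ (w : Π i : Fin k, EuclideanSpace ℂ (Fin (d i))),
      (∀ i, ‖w i‖ ≤ 1) → ‖w i₀‖ = 1 → ‖w‖ = 1 := by
    intro w h1 h2
    refine le_antisymm ((pi_norm_le_iff_of_nonneg zero_le_one).mpr h1) ?_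
    calc (1:ℝ) = ‖w i₀‖ := h2.symm
    _ ≤ ‖w‖ := norm_le_pi_norm w i₀
  have hcoord : ∀ j : Fin k, ‖x j‖ ≤ 1 ∧ ‖y j‖ ≤ 1 := by
    intro j
    constructor
    · rcases eq_or_ne j i₀ with rfl | hj
      · rw [hx]; rw [Pi.single_eq_same]; exact le_of_eq (hun _)
      · rw [hx, Pi.single_eq_of_ne hj]; simp
    · rcases eq_or_ne j i₁ with rfl | hj
      · rw [hy]; rw [Pi.single_eq_same]; exact le_of_eq (hun _)
      · rw [hy, Pi.single_eq_of_ne hj]; simp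
  have hyi₀ : y i₀ = 0 := by rw [hy, Pi.single_eq_of_ne hne]
  have hxi₀ : x i₀ = u i₀ := by rw [hx, Pi.single_eq_same]
  have hxyc : ∀ j, ‖x j + y j‖ ≤ 1 ∧ ‖x j - y j‖ ≤ 1 := by
    intro j
    rcases eq_or_ne j i₀ with rfl | hj0
    · rw [hyi₀]
      simp only [add_zero, sub_zero]
      exact ⟨(hcoord i₀).1, (hcoord i₀).1⟩
    · rcases eq_or_ne j i₁ with rfl | hj1
      · have hx0 : x i₁ = 0 := by rw [hx, Pi.single_eq_of_ne hne.symm]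
        rw [hx0]
        simp only [zero_add, zero_sub, norm_neg]
        exact ⟨(hcoord i₁).2, (hcoord i₁).2⟩
      · have hx0 : x j = 0 := by rw [hx, Pi.single_eq_of_ne hj0]
        have hy0 : y j = 0 := by rw [hy, Pi.single_eq_of_ne hj1]
        rw [hx0, hy0]
        simp
  have hxye : ‖x + y‖ = 1 := by
    refine hnorm1 _ (fun i => by simpa using (hxyc i).1) ?_
    show ‖x i₀ + y i₀‖ = 1
    rw [hyi₀, add_zero, hxi₀, hun]
  have hxme : ‖x - y‖ = 1 := by
    refine hnorm1 _ (fun i => by simpa using (hxyc i).2) ?_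
    show ‖x i₀ - y i₀‖ = 1
    rw [hyi₀, sub_zero, hxi₀, hun]
  have hxe : ‖x‖ = 1 := hnorm1 _ (fun i => (hcoord i).1) (by rw [hxi₀, hun])
  set a₁ := M (x + y) with ha₁
  set b₁ := M (x - y) with hb₁
  have hLa : L a₁ = x + y := hLM _
  have hLb : L b₁ = x - y := hLM _
  have hna : ‖a₁‖ = 1 := by rw [← hiso a₁, hLa, hxye]
  have hnb : ‖b₁‖ = 1 := by rw [← hiso b₁, hLb, hxme]
  have hmid : (2:ℝ)⁻¹ • (a₁ + b₁) = M x := by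
    rw [ha₁, hb₁, ← map_add, ← M.map_smul_of_tower]
    congr 1
    have h2x : (x + y) + (x - y) = (2:ℝ) • x := by
      rw [two_smul]; abel
    rw [h2x, smul_smul]
    norm_num
  have hmn : ‖(2:ℝ)⁻¹ • (a₁ + b₁)‖ = 1 := by
    rw [hmid, ← hiso (M x), hLM, hxe]
  have heq : a₁ = b₁ := hol_aux_midpoint hna hnb hmn
  have hxyeq : x + y = x - y := by rw [← hLa, ← hLb, heq]
  have hdiff : (x + y) - (x - y) = 0 := by rw [hxyeq, sub_self]
  have h2y : y + y = 0 := by rw [← hdiff]; abel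
  have h2y' : (2:ℝ) • y = 0 := by rw [two_smul]; exact h2y
  have hy0 : y = 0 := by simpa [smul_eq_zero] using h2y'
  have hui : u i₁ = 0 := by
    have hc := congrFun hy0 i₁
    rwa [hy, Pi.single_eq_same] at hc
  have h1 := hun i₁
  rw [hui] at h1
  simp at h1

end
end
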